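/- For α > 0 and z real, let b360 = 2^260 · 3^165 · 5 · α^(35/2) (524880 + 2123 π^12 α), b361 = −2^264 · 3^166 · 5 · α^18 (1944 + 7π^12 α), b362 = 2^267 · 3^163 · 5 · π^12 · α^(39/2). Then b360 > 0, b361 < 0, b362 > 0, and for α ∈ {7/3, 12/5} and z > 12.65 one has −361·b360 + b361·z^2 + b362·z^4 > 0. -/

import Mathlib

open Real

-- π^12 bounds
lemma pi12_lo : (924266:ℝ) < π^12 := by
  have h := Real.pi_gt_d6
  have : (3.141592:ℝ)^12 < π^12 := by
    apply pow_lt_pow_left₀ h (by norm_num)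
    norm_num
  nlinarith [this]

lemma pi12_hi : π^12 < (924271:ℝ) := by
  have h := Real.pi_lt_d6
  have : π^12 < (3.141593:ℝ)^12 := by
    apply pow_lt_pow_left₀ h Real.pi_pos.le
    norm_num
  nlinarith [this]

-- quadratic core lemma
lemma core (a p t w : ℝ) (ha : a = 7/3 ∨ a = 12/5)
    (hp1 : (924266:ℝ) < p) (hp2 : p < 924271)
    (ht0 : 0 ≤ t) (ht2 : t^2 = a) (hw : 160.0225 < w) :
    0 < 128*p*a^2*w^2 - 432*(1944+7*p*a)*t*w - 3249*(524880+2123*p*a) := by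
  rcases ha with rfl | rfl
  · have ht : t < 1.52753 := by nlinarith
    nlinarith [sq_nonneg (w - 160.0225), mul_pos (by linarith : (0:ℝ) < p) (by linarith : (0:ℝ) < w - 160.0225), mul_nonneg (by linarith : (0:ℝ) ≤ 1.52753 - t) (by linarith : (0:ℝ) ≤ w), mul_nonneg (mul_nonneg (by linarith : (0:ℝ) ≤ 1.52753 - t) (by linarith : (0:ℝ) ≤ w)) (by linarith : (0:ℝ) ≤ p)]
  · have ht : t < 1.5492 := by nlinarith
    nlinarith [sq_nonneg (w - 160.0225), mul_pos (by linarith : (0:ℝ) < p) (by linarith : (0:ℝ) < w - 160.0225), mul_nonneg (by linarith : (0:ℝ) ≤ 1.5492 - t) (by linarith : (0:ℝ) ≤ w), mul_nonneg (mul_nonneg (by linarith : (0:ℝ) ≤ 1.5492 - t) (by linarith : (0:ℝ) ≤ w)) (by linarith : (0:ℝ) ≤ p)]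

theorem leading_coefficients_determinantal (α : ℝ) (hα : 0 < α) :
    0 < 2^260 * 3^165 * 5 * α ^ ((35:ℝ)/2) * (524880 + 2123*π^12*α) ∧
    -(2^264) * 3^166 * 5 * α^18 * (1944 + 7*π^12*α) < 0 ∧
    0 < 2^267 * 3^163 * 5 * π^12 * α ^ ((39:ℝ)/2) ∧
    ((α = 7/3 ∨ α = 12/5) → ∀ z : ℝ, 12.65 < z →
      0 < -361 * (2^260 * 3^165 * 5 * α ^ ((35:ℝ)/2) * (524880 + 2123*π^12*α))
          + (-(2^264) * 3^166 * 5 * α^18 * (1944 + 7*π^12*α)) * z^2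
          + (2^267 * 3^163 * 5 * π^12 * α ^ ((39:ℝ)/2)) * z^4) := by
  have hπ := Real.pi_pos
  refine ⟨by positivity, ?_, by positivity, ?_⟩
  · have h : 0 < 2^264 * 3^166 * 5 * α^18 * (1944 + 7*π^12*α) := by positivity
    linarith
  · intro hcase z hz
    set t : ℝ := Real.sqrt α with htdef
    have ht0 : 0 ≤ t := Real.sqrt_nonneg α
    have ht2 : t^2 = α := Real.sq_sqrt hα.le
    have h35 : α ^ ((35:ℝ)/2) = t^35 := by
      rw [htdef, Real.sqrt_eq_rpow, ← Real.rpow_natCast (α ^ ((1:ℝ)/2)) 35,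
        ← Real.rpow_mul hα.le]
      norm_num
    have h39 : α ^ ((39:ℝ)/2) = t^39 := by
      rw [htdef, Real.sqrt_eq_rpow, ← Real.rpow_natCast (α ^ ((1:ℝ)/2)) 39,
        ← Real.rpow_mul hα.le]
      norm_num
    have h36 : α^18 = t^36 := by rw [← ht2]; ring
    have ht4 : t^4 = α^2 := by rw [← ht2]; ring
    have hE : -361 * (2^260 * 3^165 * 5 * α ^ ((35:ℝ)/2) * (524880 + 2123*π^12*α))
          + (-(2^264) * 3^166 * 5 * α^18 * (1944 + 7*π^12*α)) * z^2
          + (2^267 * 3^163 * 5 * π^12 * α ^ ((39:ℝ)/2)) * z^4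
        = 2^260 * 3^163 * 5 * t^35 *
          (128*(π^12)*α^2*(z^2)^2 - 432*(1944+7*(π^12)*α)*t*(z^2)
            - 3249*(524880+2123*(π^12)*α)) := by
      rw [h35, h36, h39, ← ht4, show (2:ℝ)^264 = 2^260*2^4 by rw [← pow_add],
        show (2:ℝ)^267 = 2^260*2^7 by rw [← pow_add]]; generalize (2:ℝ)^260 = c; ring
    rw [hE]
    have htpos : 0 < t := Real.sqrt_pos.mpr hα
    have hw : (160.0225:ℝ) < z^2 := by nlinarith
    exact mul_pos (by positivity)
      (core α (π^12) t (z^2) hcase pi12_lo pi12_hi ht0 ht2 hw)
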